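/- Uniform localization of zeros in the generalized matrix Nevai class: let {A_m}, {B_m}, {C_m} be sequences of N×N complex matrices with every A_m invertible, converging to matrices A, B, C respectively (with A and C nonsingular), and let {V_m}_{m ≥ -1} be the N×N matrix polynomials determined by V_{-1} = 0, V_0 = I and z V_m(z) = A_m V_{m+1}(z) + B_m V_m(z) + C_m V_{m-1}(z) for all m ≥ 0. Then there exists a positive constant M, independent of m, such that for every m ≥ 1 every root z₀ ∈ ℂ of the scalar polynomial det(V_m) satisfies |z₀| < M. -/

import Mathlib

open Polynomial Matrix Finset

noncomputable section

/-- `N × N` matrices with polynomial entries, viewed as matrix polynomials. -/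
abbrev MatPoly (N : ℕ) := Matrix (Fin N) (Fin N) (Polynomial ℂ)

/-- Evaluation of a matrix polynomial at a complex number (entrywise evaluation). -/
def evalM {N : ℕ} (Q : MatPoly N) (z : ℂ) : Matrix (Fin N) (Fin N) ℂ :=
  Q.map (Polynomial.eval z)

/-- **Uniform localization of zeros in the generalized matrix Nevai class.**  If the
recurrence coefficients converge (to `A∞`, `B∞`, `C∞` with `A∞`, `C∞` nonsingular),
then there is a constant `M > 0`, independent of `m`, such that every root of the
scalar polynomial `det V_m` lies in the disk `{|z| < M}`. -/
theorem nevai_class_zeros_uniformly_bounded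
    (N : ℕ) (hN : 1 ≤ N)
    (A B C : ℕ → Matrix (Fin N) (Fin N) ℂ)
    (hA : ∀ m, IsUnit (A m))
    (Ainf Binf Cinf : Matrix (Fin N) (Fin N) ℂ)
    (hAinf : IsUnit Ainf) (hCinf : IsUnit Cinf)
    (hAlim : Filter.Tendsto A Filter.atTop (nhds Ainf))
    (hBlim : Filter.Tendsto B Filter.atTop (nhds Binf))
    (hClim : Filter.Tendsto C Filter.atTop (nhds Cinf))
    (V : ℕ → MatPoly N)
    (hV0I : V 0 = 1)
    (hrec0 : ∀ z : ℂ, z • evalM (V 0) z = A 0 * evalM (V 1) z + B 0 * evalM (V 0) z)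
    (hrec : ∀ (m : ℕ) (z : ℂ), z • evalM (V (m + 1)) z =
      A (m + 1) * evalM (V (m + 2)) z + B (m + 1) * evalM (V (m + 1)) z +
        C (m + 1) * evalM (V m) z) :
    ∃ M : ℝ, 0 < M ∧ ∀ m : ℕ, 1 ≤ m → ∀ z : ℂ,
      (Matrix.det (V m)).eval z = 0 → ‖z‖ < M := by
  classical
  letI : NormedAddCommGroup (Matrix (Fin N) (Fin N) ℂ) :=
    Matrix.linftyOpNormedAddCommGroup
  letI : NormedRing (Matrix (Fin N) (Fin N) ℂ) := Matrix.linftyOpNormedRing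
  obtain ⟨Ka, hKa⟩ := (hAlim.norm).bddAbove_range
  obtain ⟨Kb, hKb⟩ := (hBlim.norm).bddAbove_range
  obtain ⟨Kc, hKc⟩ := (hClim.norm).bddAbove_range
  set K : ℝ := max 1 (max Ka (max Kb Kc)) with hK
  have hK1 : (1:ℝ) ≤ K := le_max_left _ _
  have hK0 : (0:ℝ) < K := lt_of_lt_of_le one_pos hK1
  have hAK : ∀ m, ‖A m‖ ≤ K := fun m =>
    le_trans (hKa ⟨m, rfl⟩) (le_trans (le_max_left _ _) (le_max_right _ _))
  have hBK : ∀ m, ‖B m‖ ≤ K := fun m =>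
    le_trans (hKb ⟨m, rfl⟩)
      (le_trans (le_trans (le_max_left _ _) (le_max_right _ _)) (le_max_right _ _))
  have hCK : ∀ m, ‖C m‖ ≤ K := fun m =>
    le_trans (hKc ⟨m, rfl⟩)
      (le_trans (le_trans (le_max_right _ _) (le_max_right _ _)) (le_max_right _ _))
  refine ⟨3 * K, by positivity, ?_⟩
  intro m hm z hdet
  by_contra hz
  push_neg at hz
  have hz' : 3 * K ≤ ‖z‖ := by simpa using hz
  -- the evaluated matrix is singular
  have hdet' : (evalM (V m) z).det = 0 := by
    have h := (Polynomial.evalRingHom z).map_det (V m)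
    simp only [Polynomial.coe_evalRingHom, RingHom.mapMatrix_apply] at h
    rw [evalM, ← h]
    exact hdet
  obtain ⟨v, hv0, hvm⟩ := (Matrix.exists_mulVec_eq_zero_iff).mpr hdet'
  -- the key one-step estimate
  have aux : ∀ (Am Bm : Matrix (Fin N) (Fin N) ℂ) (x a c : Fin N → ℂ),
      ‖Am‖ ≤ K → ‖Bm‖ ≤ K → z • a = Am.mulVec x + Bm.mulVec a + c →
      ‖c‖ ≤ K * ‖a‖ → ‖a‖ ≤ ‖x‖ := by
    intro Am Bm x a c hAm hBm heq hc
    have h1 : ‖z • a‖ ≤ ‖Am.mulVec x‖ + ‖Bm.mulVec a‖ + ‖c‖ := by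
      rw [heq]
      exact le_trans (norm_add_le _ _) (add_le_add (norm_add_le _ _) le_rfl)
    have h2 : ‖Am.mulVec x‖ ≤ K * ‖x‖ :=
      le_trans (Matrix.linfty_opNorm_mulVec _ _)
        (mul_le_mul_of_nonneg_right hAm (norm_nonneg _))
    have h3 : ‖Bm.mulVec a‖ ≤ K * ‖a‖ :=
      le_trans (Matrix.linfty_opNorm_mulVec _ _)
        (mul_le_mul_of_nonneg_right hBm (norm_nonneg _))
    have h4 : ‖z • a‖ = ‖z‖ * ‖a‖ := by rw [norm_smul]
    have h5 : 3 * K * ‖a‖ ≤ ‖z‖ * ‖a‖ :=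
      mul_le_mul_of_nonneg_right hz' (norm_nonneg _)
    have h6 : K * ‖a‖ ≤ K * ‖x‖ := by nlinarith [norm_nonneg a, norm_nonneg x]
    exact le_of_mul_le_mul_left h6 hK0
  -- growth of ‖V_n(z) w‖ along the recurrence
  have key : ∀ n : ℕ, ∀ w : Fin N → ℂ,
      ‖w‖ ≤ ‖(evalM (V n) z).mulVec w‖ ∧
      ‖(evalM (V n) z).mulVec w‖ ≤ ‖(evalM (V (n+1)) z).mulVec w‖ := by
    intro n
    induction n with
    | zero =>
      intro w
      have h0 : evalM (V 0) z = 1 := by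
        rw [hV0I, evalM]
        exact Matrix.map_one _ (by simp) (by simp)
      have h0w : (evalM (V 0) z).mulVec w = w := by rw [h0, Matrix.one_mulVec]
      refine ⟨by rw [h0w], ?_⟩
      have hrec0' := congrArg (fun M => Matrix.mulVec M w) (hrec0 z)
      simp only [Matrix.smul_mulVec, Matrix.add_mulVec,
        ← Matrix.mulVec_mulVec, h0w] at hrec0'
      rw [h0w]
      refine aux (A 0) (B 0) ((evalM (V 1) z).mulVec w) w 0 (hAK 0) (hBK 0) ?_ ?_
      · rw [add_zero]; exact hrec0'
      · simp [mul_nonneg hK0.le (norm_nonneg w)]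
    | succ n ih =>
      intro w
      have hrec' := congrArg (fun M => Matrix.mulVec M w) (hrec n z)
      simp only [Matrix.smul_mulVec, Matrix.add_mulVec,
        ← Matrix.mulVec_mulVec] at hrec'
      have hgrow : ‖(evalM (V (n+1)) z).mulVec w‖ ≤
          ‖(evalM (V (n+2)) z).mulVec w‖ := by
        refine aux (A (n+1)) (B (n+1)) ((evalM (V (n+2)) z).mulVec w)
          ((evalM (V (n+1)) z).mulVec w)
          ((C (n+1)).mulVec ((evalM (V n) z).mulVec w))
          (hAK (n+1)) (hBK (n+1)) hrec' ?_
        calc ‖(C (n+1)).mulVec ((evalM (V n) z).mulVec w)‖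
            ≤ K * ‖(evalM (V n) z).mulVec w‖ :=
              le_trans (Matrix.linfty_opNorm_mulVec _ _)
                (mul_le_mul_of_nonneg_right (hCK (n+1)) (norm_nonneg _))
          _ ≤ K * ‖(evalM (V (n+1)) z).mulVec w‖ :=
              mul_le_mul_of_nonneg_left (ih w).2 hK0.le
      exact ⟨le_trans (ih w).1 (ih w).2, hgrow⟩
  have hfin := (key m v).1
  rw [hvm] at hfin
  simp only [norm_zero] at hfin
  exact hv0 (norm_le_zero_iff.mp hfin)

end
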